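/- For every N ≥ 2 and every integer m ≥ 1, the generic stretching factor of φ_{N,m} satisfies λ_A(φ_{N,m}) ≤ 1 + m/N, i.e., limsup_{n→∞} avg_n(φ_{N,m}) ≤ (N+m)/N. -/

import Mathlib

/-- The reduced word length of an element of the free group on `Fin N`. -/
noncomputable def wlen {N : ℕ} (w : FreeGroup (Fin N)) : ℕ := w.toWord.length

/-- The cyclically reduced length of `w`: the minimal word length among all conjugates. -/
noncomputable def cyclen {N : ℕ} (w : FreeGroup (Fin N)) : ℕ :=
  sInf (Set.range fun g : FreeGroup (Fin N) => wlen (g * w * g⁻¹))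

/-- The average of `‖φ w‖_A` over the sphere of radius `n`, divided by `n`. -/
noncomputable def avg (N : ℕ) (φ : FreeGroup (Fin N) → FreeGroup (Fin N)) (n : ℕ) : ℝ :=
  (∑' w : {w : FreeGroup (Fin N) // wlen w = n}, (cyclen (φ w.1) : ℝ)) /
    ((n : ℝ) * ((2 * N * (2 * N - 1) ^ (n - 1) : ℕ) : ℝ))



open FreeGroup

namespace Stmt12Aux

variable {N : ℕ}

lemma wlen_eq_norm (w : FreeGroup (Fin N)) : wlen w = FreeGroup.norm w := rfl

lemma cyclen_le_wlen (w : FreeGroup (Fin N)) : cyclen w ≤ wlen w := by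
  apply Nat.sInf_le
  exact ⟨1, by group⟩

lemma wlen_mul_le (x y : FreeGroup (Fin N)) : wlen (x * y) ≤ wlen x + wlen y :=
  FreeGroup.norm_mul_le x y

lemma wlen_of (a : Fin N) : wlen (FreeGroup.of a) = 1 := FreeGroup.norm_of a

lemma wlen_inv (x : FreeGroup (Fin N)) : wlen x⁻¹ = wlen x := FreeGroup.norm_inv_eq

lemma wlen_pow_le (x : FreeGroup (Fin N)) (k : ℕ) : wlen (x ^ k) ≤ k * wlen x := by
  induction k with
  | zero => simp [wlen, FreeGroup.toWord_one]
  | succ k ih =>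
    calc wlen (x ^ (k+1)) = wlen (x ^ k * x) := by rw [pow_succ]
    _ ≤ wlen (x ^ k) + wlen x := wlen_mul_le _ _
    _ ≤ k * wlen x + wlen x := by omega
    _ = (k+1) * wlen x := by ring

end Stmt12Aux

namespace Stmt12Aux

variable {N : ℕ}

lemma wlen_map_le (e : Fin N → Fin N) (w : FreeGroup (Fin N)) :
    wlen (FreeGroup.map e w) ≤ wlen w := by
  conv_lhs => rw [← FreeGroup.mk_toWord (x := w)]
  rw [FreeGroup.map.mk]
  calc wlen (FreeGroup.mk (w.toWord.map fun x => (e x.1, x.2)))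
      = (FreeGroup.reduce (w.toWord.map fun x => (e x.1, x.2))).length := by
        rw [wlen, FreeGroup.toWord_mk]
    _ ≤ (w.toWord.map fun x => (e x.1, x.2)).length :=
        (FreeGroup.Red.length_le (FreeGroup.reduce.red))
    _ = wlen w := by rw [List.length_map]; rfl

lemma wlen_map (e : Equiv.Perm (Fin N)) (w : FreeGroup (Fin N)) :
    wlen (FreeGroup.map e w) = wlen w := by
  refine le_antisymm (wlen_map_le e w) ?_
  have h2 : wlen (FreeGroup.map e.symm (FreeGroup.map e w)) ≤ wlen (FreeGroup.map e w) :=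
    wlen_map_le _ _
  rwa [FreeGroup.map.comp, show (⇑e.symm ∘ ⇑e) = id by ext x; simp, FreeGroup.map.id] at h2

lemma toWord_map (e : Equiv.Perm (Fin N)) (w : FreeGroup (Fin N)) :
    (FreeGroup.map e w).toWord = w.toWord.map (fun x => (e x.1, x.2)) := by
  have hsub : List.Sublist (FreeGroup.map e w).toWord (w.toWord.map (fun x => (e x.1, x.2))) := by
    conv_lhs => rw [← FreeGroup.mk_toWord (x := w)]
    rw [FreeGroup.map.mk, FreeGroup.toWord_mk]
    exact FreeGroup.Red.sublist FreeGroup.reduce.red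
  refine hsub.eq_of_length ?_
  rw [List.length_map]
  exact wlen_map e w

end Stmt12Aux

namespace Stmt12Aux

variable {N : ℕ}

lemma mk_single_true (i : Fin N) : FreeGroup.mk [(i, true)] = FreeGroup.of i := rfl

lemma mk_single_false (i : Fin N) : FreeGroup.mk [(i, false)] = (FreeGroup.of i)⁻¹ := by
  rw [← mk_single_true, FreeGroup.inv_mk]; rfl

lemma wlen_phi_single (m : ℕ) (hN : 2 ≤ N)
    (φ : FreeGroup (Fin N) →* FreeGroup (Fin N))
    (hφ1 : φ (FreeGroup.of ⟨0, by omega⟩) =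
      FreeGroup.of ⟨0, by omega⟩ * FreeGroup.of ⟨1, by omega⟩ ^ m)
    (hφ2 : ∀ i : Fin N, i ≠ ⟨0, by omega⟩ → φ (FreeGroup.of i) = FreeGroup.of i)
    (x : Fin N × Bool) :
    wlen (φ (FreeGroup.mk [x])) ≤ 1 + m * (if x.1 = (⟨0, by omega⟩ : Fin N) then 1 else 0) := by
  obtain ⟨i, b⟩ := x
  have key : ∀ c : Fin N × Bool, wlen (φ (FreeGroup.of i)) ≤
      1 + m * (if i = (⟨0, by omega⟩ : Fin N) then 1 else 0) := by
    intro _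
    by_cases hi : i = (⟨0, by omega⟩ : Fin N)
    · subst hi
      rw [hφ1, if_pos rfl]
      calc wlen _ ≤ wlen (FreeGroup.of (⟨0, by omega⟩ : Fin N)) +
            wlen (FreeGroup.of (⟨1, by omega⟩ : Fin N) ^ m) := wlen_mul_le _ _
        _ ≤ 1 + m * 1 := by
            have := wlen_pow_le (FreeGroup.of (⟨1, by omega⟩ : Fin N)) m
            rw [wlen_of] at this ⊢
            omega
    · rw [hφ2 i hi, if_neg hi, wlen_of]; omega
  cases b with
  | true => rw [mk_single_true]; exact key (i, true)
  | false =>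
    rw [mk_single_false, φ.map_inv, wlen_inv]; exact key (i, false)

lemma wlen_phi_le (m : ℕ) (hN : 2 ≤ N)
    (φ : FreeGroup (Fin N) →* FreeGroup (Fin N))
    (hφ1 : φ (FreeGroup.of ⟨0, by omega⟩) =
      FreeGroup.of ⟨0, by omega⟩ * FreeGroup.of ⟨1, by omega⟩ ^ m)
    (hφ2 : ∀ i : Fin N, i ≠ ⟨0, by omega⟩ → φ (FreeGroup.of i) = FreeGroup.of i)
    (L : List (Fin N × Bool)) :
    wlen (φ (FreeGroup.mk L)) ≤ L.length + m * (L.map Prod.fst).count ⟨0, by omega⟩ := by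
  induction L with
  | nil =>
    have : FreeGroup.mk ([] : List (Fin N × Bool)) = 1 := rfl
    simp [this, wlen, FreeGroup.toWord_one]
  | cons x L ih =>
    have hmk : FreeGroup.mk (x :: L) = FreeGroup.mk [x] * FreeGroup.mk L := by
      rw [FreeGroup.mul_mk]; rfl
    rw [hmk, φ.map_mul]
    calc wlen (φ (FreeGroup.mk [x]) * φ (FreeGroup.mk L))
        ≤ wlen (φ (FreeGroup.mk [x])) + wlen (φ (FreeGroup.mk L)) := wlen_mul_le _ _
      _ ≤ (1 + m * (if x.1 = (⟨0, by omega⟩ : Fin N) then 1 else 0)) +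
          (L.length + m * (L.map Prod.fst).count ⟨0, by omega⟩) := by
          exact Nat.add_le_add (wlen_phi_single m hN φ hφ1 hφ2 x) ih
      _ ≤ (x :: L).length + m * ((x :: L).map Prod.fst).count ⟨0, by omega⟩ := by
          simp only [List.length_cons, List.map_cons, List.count_cons]
          by_cases hx : x.1 = (⟨0, by omega⟩ : Fin N) <;> simp [hx, Nat.mul_succ] <;> omega

end Stmt12Aux

namespace Stmt12Aux

variable {N : ℕ}

instance sphereFinite (N n : ℕ) : Finite {w : FreeGroup (Fin N) // wlen w = n} := by
  haveI : Fintype (List.Vector (Fin N × Bool) n) := inferInstance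
  haveI : Finite {l : List (Fin N × Bool) // l.length = n} :=
    Finite.of_fintype (List.Vector (Fin N × Bool) n)
  refine Finite.of_injective (fun w => (⟨w.1.toWord, w.2⟩ : List.Vector (Fin N × Bool) n)) ?_
  intro a b h
  have := congrArg Subtype.val h
  exact Subtype.ext (FreeGroup.toWord_injective this)

lemma reduce_tail {x : Fin N × Bool} {L : List (Fin N × Bool)}
    (h : FreeGroup.reduce (x :: L) = x :: L) : FreeGroup.reduce L = L := by
  have h1 : FreeGroup.Red (x :: L) (x :: FreeGroup.reduce L) :=
    FreeGroup.Red.cons_cons FreeGroup.reduce.red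
  have h2 : FreeGroup.reduce (x :: L) = x :: FreeGroup.reduce L :=
    FreeGroup.reduce.min (by rw [h]; exact h1)
  rw [h] at h2
  exact (List.cons_injective.eq_iff.mp h2.symm)

lemma reduced_no_cancel {x y : Fin N × Bool} {L : List (Fin N × Bool)}
    (h : FreeGroup.reduce (x :: y :: L) = x :: y :: L) :
    ¬ (y.1 = x.1 ∧ y.2 = !x.2) := by
  rintro ⟨h1, h2⟩
  have hy : y = (x.1, !x.2) := Prod.ext h1 h2
  subst hy
  have hstep : FreeGroup.Red.Step ([] ++ (x.1, x.2) :: (x.1, !x.2) :: L) ([] ++ L) :=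
    FreeGroup.Red.Step.not
  simp only [List.nil_append] at hstep
  have := FreeGroup.reduce.Step.eq hstep
  rw [show ((x.1, x.2) : Fin N × Bool) = x from rfl] at this
  rw [h] at this
  have hlen : L.length ≤ L.length := le_refl _
  have h3 : (x :: (x.1, !x.2) :: L).length ≤ L.length := by
    rw [this]
    exact FreeGroup.Red.length_le FreeGroup.reduce.red
  simp at h3

end Stmt12Aux

namespace Stmt12Aux

variable {N : ℕ}

lemma card_ne_letter (hN : 0 < N) (a : Fin N × Bool) :
    Fintype.card {x : Fin N × Bool // x ≠ a} = 2 * N - 1 := by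
  have : Fintype.card {x : Fin N × Bool // x ≠ a} =
      Fintype.card (Fin N × Bool) - Fintype.card {x : Fin N × Bool // x = a} :=
    Fintype.card_subtype_compl _
  rw [this, Fintype.card_subtype_eq]
  simp [Fintype.card_prod, mul_comm]

lemma toWord_length (w : FreeGroup (Fin N)) : w.toWord.length = wlen w := rfl

lemma card_sphere_one_le (hN : 0 < N) :
    Nat.card {w : FreeGroup (Fin N) // wlen w = 1} ≤ 2 * N := by
  have hinj : Function.Injective
      (fun w : {w : FreeGroup (Fin N) // wlen w = 1} =>
        w.1.toWord.head (by
          intro hnil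
          have := w.2
          rw [wlen, hnil] at this
          simp at this)) := by
    intro a b h
    obtain ⟨x, hx⟩ := List.length_eq_one_iff.mp (a.2 : a.1.toWord.length = 1)
    obtain ⟨y, hy⟩ := List.length_eq_one_iff.mp (b.2 : b.1.toWord.length = 1)
    simp only [hx, hy, List.head_cons] at h
    apply Subtype.ext
    apply FreeGroup.toWord_injective
    rw [hx, hy, h]
  calc Nat.card {w : FreeGroup (Fin N) // wlen w = 1}
      ≤ Nat.card (Fin N × Bool) := Nat.card_le_card_of_injective _ hinj
    _ = 2 * N := by simp [Nat.card_eq_fintype_card, mul_comm]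

lemma card_sphere_step (hN : 0 < N) (k : ℕ) (hk : 1 ≤ k) :
    Nat.card {w : FreeGroup (Fin N) // wlen w = k + 1} ≤
      Nat.card {w : FreeGroup (Fin N) // wlen w = k} * (2 * N - 1) := by
  classical
  set S1 := {w : FreeGroup (Fin N) // wlen w = k + 1}
  set S0 := {w : FreeGroup (Fin N) // wlen w = k}
  -- bad letter for a sphere-k element: inverse of its first letter
  have hinh : Inhabited (Fin N × Bool) := ⟨(⟨0, hN⟩, true)⟩
  let bad : S0 → Fin N × Bool := fun v => ((v.1.toWord.head!).1, !(v.1.toWord.head!).2)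
  let enc : (a : Fin N × Bool) → {x : Fin N × Bool // x ≠ a} ≃ Fin (2 * N - 1) :=
    fun a => Fintype.equivFinOfCardEq (card_ne_letter hN a)
  -- the map
  have hne : ∀ w : S1, w.1.toWord ≠ [] := by
    intro w hnil
    have := w.2
    rw [wlen, hnil] at this
    simp at this
  have hred : ∀ w : S1, FreeGroup.reduce w.1.toWord.tail = w.1.toWord.tail := by
    intro w
    have h1 : FreeGroup.reduce w.1.toWord = w.1.toWord := FreeGroup.reduce_toWord _
    have h2 := List.cons_head_tail (hne w)
    rw [← h2] at h1
    exact reduce_tail h1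
  have htw : ∀ w : S1, (FreeGroup.mk w.1.toWord.tail).toWord = w.1.toWord.tail := by
    intro w
    rw [FreeGroup.toWord_mk, hred w]
  have hlen : ∀ w : S1, wlen (FreeGroup.mk w.1.toWord.tail) = k := by
    intro w
    rw [wlen, htw w, List.length_tail, toWord_length, w.2]
    omega
  let tailOf : S1 → S0 := fun w => ⟨FreeGroup.mk w.1.toWord.tail, hlen w⟩
  have hcond : ∀ w : S1, w.1.toWord.head (hne w) ≠ bad (tailOf w) := by
    intro w hEq
    have htail : (tailOf w).1.toWord = w.1.toWord.tail := htw w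
    -- tail is nonempty since k ≥ 1
    have htne : w.1.toWord.tail ≠ [] := by
      intro hnil
      have := hlen w
      rw [wlen, htw w, hnil] at this
      simp at this
      omega
    obtain ⟨y, r, hyr⟩ := List.exists_cons_of_ne_nil htne
    have hx : w.1.toWord = w.1.toWord.head (hne w) :: y :: r := by
      conv_lhs => rw [← List.cons_head_tail (hne w)]
      rw [hyr]
    have hredw : FreeGroup.reduce (w.1.toWord.head (hne w) :: y :: r)
        = w.1.toWord.head (hne w) :: y :: r := by
      rw [← hx]; exact FreeGroup.reduce_toWord _
    have hnc := reduced_no_cancel hredw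
    -- from hEq : head = bad (tailOf w)
    have hhead! : (tailOf w).1.toWord.head! = y := by
      rw [htail, hyr]; rfl
    rw [show bad (tailOf w) = ((tailOf w).1.toWord.head!.1, !(tailOf w).1.toWord.head!.2)
      from rfl, hhead!] at hEq
    apply hnc
    constructor
    · rw [hEq]
    · rw [hEq]; simp
  let F : S1 → S0 × Fin (2 * N - 1) := fun w =>
    (tailOf w, enc (bad (tailOf w)) ⟨w.1.toWord.head (hne w), hcond w⟩)
  let decode : S0 × Fin (2 * N - 1) → FreeGroup (Fin N) := fun p =>
    FreeGroup.mk (((enc (bad p.1)).symm p.2).1 :: p.1.1.toWord)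
  have hdec : ∀ w : S1, decode (F w) = w.1 := by
    intro w
    show FreeGroup.mk (((enc (bad (tailOf w))).symm
        ((enc (bad (tailOf w))) ⟨w.1.toWord.head (hne w), hcond w⟩)).1
        :: (tailOf w).1.toWord) = w.1
    rw [Equiv.symm_apply_apply]
    show FreeGroup.mk (w.1.toWord.head (hne w) :: (tailOf w).1.toWord) = w.1
    have : (tailOf w).1.toWord = w.1.toWord.tail := htw w
    rw [this]
    conv_rhs => rw [← FreeGroup.mk_toWord (x := w.1),
      ← List.cons_head_tail (hne w)]
  have hFinj : Function.Injective F := by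
    intro a b hab
    apply Subtype.ext
    rw [← hdec a, ← hdec b, hab]
  calc Nat.card S1 ≤ Nat.card (S0 × Fin (2 * N - 1)) := Nat.card_le_card_of_injective F hFinj
    _ = Nat.card S0 * (2 * N - 1) := by rw [Nat.card_prod]; simp

lemma card_sphere_le (hN : 0 < N) (n : ℕ) (hn : 1 ≤ n) :
    Nat.card {w : FreeGroup (Fin N) // wlen w = n} ≤ 2 * N * (2 * N - 1) ^ (n - 1) := by
  induction n with
  | zero => omega
  | succ k ih =>
    rcases Nat.eq_zero_or_pos k with h0 | h0
    · subst h0; simpa using card_sphere_one_le hN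
    · have h1 := card_sphere_step hN k h0
      have h2 := ih h0
      calc Nat.card {w : FreeGroup (Fin N) // wlen w = k + 1}
          ≤ Nat.card {w : FreeGroup (Fin N) // wlen w = k} * (2 * N - 1) := h1
        _ ≤ 2 * N * (2 * N - 1) ^ (k - 1) * (2 * N - 1) := Nat.mul_le_mul_right _ h2
        _ = 2 * N * (2 * N - 1) ^ k := by
            rw [mul_assoc, ← pow_succ]
            congr 2
            omega
        _ = 2 * N * (2 * N - 1) ^ (k + 1 - 1) := by norm_num

end Stmt12Aux

namespace Stmt12Aux

variable {N : ℕ}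

lemma sum_count (L : List (Fin N)) : ∑ j : Fin N, L.count j = L.length := by
  induction L with
  | nil => simp
  | cons a L ih =>
    simp only [List.count_cons, List.length_cons, Finset.sum_add_distrib, ih]
    simp

lemma count_map_perm (e : Equiv.Perm (Fin N)) (w : FreeGroup (Fin N)) (j : Fin N) :
    (((FreeGroup.map e w).toWord.map Prod.fst).count (e j)) =
      ((w.toWord.map Prod.fst).count j) := by
  rw [toWord_map, List.map_map]
  have : (Prod.fst ∘ fun x : Fin N × Bool => ((e x.1 : Fin N), x.2)) =
      (fun i : Fin N => e i) ∘ Prod.fst := rfl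
  rw [this, ← List.map_map]
  exact List.count_map_of_injective _ _ e.injective _

end Stmt12Aux

open Stmt12Aux

/-- for every `N ≥ 2` and `m ≥ 1`, the generic stretching factor of
`φ_{N,m}` (given by `a₁ ↦ a₁a₂^m`, `aᵢ ↦ aᵢ` for `i ≥ 2`) satisfies
`λ_A(φ_{N,m}) = limsup_n avg_n(φ_{N,m}) ≤ 1 + m/N = (N+m)/N`. -/
theorem stmt12 (N m : ℕ) (hN : 2 ≤ N) (hm : 1 ≤ m)
    (φ : FreeGroup (Fin N) →* FreeGroup (Fin N))
    (hφ1 : φ (FreeGroup.of ⟨0, by omega⟩) =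
      FreeGroup.of ⟨0, by omega⟩ * FreeGroup.of ⟨1, by omega⟩ ^ m)
    (hφ2 : ∀ i : Fin N, i ≠ ⟨0, by omega⟩ → φ (FreeGroup.of i) = FreeGroup.of i) :
    Filter.limsup (avg N (fun w => φ w)) Filter.atTop ≤ ((N : ℝ) + m) / N := by
  classical
  have h0N : 0 < N := by omega
  have hrhs : (0:ℝ) ≤ ((N : ℝ) + m) / N := by positivity
  have havg_nonneg : ∀ n, 0 ≤ avg N (fun w => φ w) n := by
    intro n
    rw [avg]
    apply div_nonneg
    · exact tsum_nonneg (fun w => by positivity)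
    · positivity
  have hbound : ∀ n : ℕ, avg N (fun w => φ w) n ≤ ((N : ℝ) + m) / N := by
    intro n
    rcases Nat.eq_zero_or_pos n with hn | hn
    · subst hn
      rw [avg]
      simp [hrhs]
    · letI : Fintype {w : FreeGroup (Fin N) // wlen w = n} := Fintype.ofFinite _
      set z : Fin N := ⟨0, by omega⟩ with hz
      set c : Fin N → FreeGroup (Fin N) → ℕ :=
        fun j w => ((w.toWord.map Prod.fst).count j) with hc
      set Sp := {w : FreeGroup (Fin N) // wlen w = n} with hSp
      -- pointwise bound
      have key1 : ∀ w : Sp, cyclen (φ w.1) ≤ n + m * c z w.1 := by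
        intro w
        calc cyclen (φ w.1) ≤ wlen (φ w.1) := cyclen_le_wlen _
          _ = wlen (φ (FreeGroup.mk w.1.toWord)) := by rw [FreeGroup.mk_toWord]
          _ ≤ w.1.toWord.length + m * ((w.1.toWord.map Prod.fst).count z) :=
              wlen_phi_le m hN φ hφ1 hφ2 _
          _ = n + m * c z w.1 := by rw [toWord_length, w.2]
      -- symmetry
      have key2 : ∀ j : Fin N, (∑ w : Sp, c j w.1) = ∑ w : Sp, c z w.1 := by
        intro j
        set e : Equiv.Perm (Fin N) := Equiv.swap z j with he
        have hwlen : ∀ w : FreeGroup (Fin N),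
            wlen w = n ↔ wlen (FreeGroup.map e w) = n := by
          intro w; rw [wlen_map]
        refine (Fintype.sum_equiv
          (Equiv.subtypeEquiv (FreeGroup.freeGroupCongr e).toEquiv hwlen)
          (fun w : Sp => c z w.1) (fun w : Sp => c j w.1) ?_).symm
        intro w
        show c z w.1 = c j ((FreeGroup.map e w.1))
        have := count_map_perm e w.1 z
        rw [Equiv.swap_apply_left] at this
        simp only [hc]
        exact this.symm
      -- double counting
      have key3 : N * (∑ w : Sp, c z w.1) = n * Fintype.card Sp := by
        have h1 : (∑ j : Fin N, ∑ w : Sp, c j w.1) = N * ∑ w : Sp, c z w.1 := by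
          rw [Finset.sum_congr rfl (fun j _ => key2 j)]
          simp [Finset.sum_const, Finset.card_univ, mul_comm]
        have h2 : (∑ j : Fin N, ∑ w : Sp, c j w.1) = ∑ w : Sp, n := by
          rw [Finset.sum_comm]
          refine Finset.sum_congr rfl (fun w _ => ?_)
          have := sum_count (w.1.toWord.map Prod.fst)
          simp only [hc]
          rw [this, List.length_map, toWord_length, w.2]
        rw [← h1, h2]
        simp [Finset.sum_const, Finset.card_univ, mul_comm]
      -- summed bound over ℕ
      have key4 : (∑ w : Sp, cyclen (φ w.1)) ≤
          n * Fintype.card Sp + m * ∑ w : Sp, c z w.1 := by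
        calc (∑ w : Sp, cyclen (φ w.1)) ≤ ∑ w : Sp, (n + m * c z w.1) :=
            Finset.sum_le_sum (fun w _ => key1 w)
          _ = n * Fintype.card Sp + m * ∑ w : Sp, c z w.1 := by
            rw [Finset.sum_add_distrib, Finset.sum_const, Finset.card_univ,
              Finset.mul_sum]
            simp [mul_comm]
      set D : ℕ := 2 * N * (2 * N - 1) ^ (n - 1) with hD
      have hcard : Fintype.card Sp ≤ D := by
        rw [← Nat.card_eq_fintype_card]
        exact card_sphere_le h0N n hn
      have key5 : N * (∑ w : Sp, cyclen (φ w.1)) ≤ (N + m) * (n * D) := by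
        calc N * (∑ w : Sp, cyclen (φ w.1))
            ≤ N * (n * Fintype.card Sp + m * ∑ w : Sp, c z w.1) :=
              Nat.mul_le_mul_left _ key4
          _ = N * (n * Fintype.card Sp) + m * (N * ∑ w : Sp, c z w.1) := by ring
          _ = N * (n * Fintype.card Sp) + m * (n * Fintype.card Sp) := by rw [key3]
          _ = (N + m) * (n * Fintype.card Sp) := by ring
          _ ≤ (N + m) * (n * D) := by
              exact Nat.mul_le_mul_left _ (Nat.mul_le_mul_left _ hcard)
      -- pass to ℝ
      have hDpos : 0 < D := by
        have : 1 ≤ (2 * N - 1) ^ (n - 1) := Nat.one_le_pow _ _ (by omega)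
        have : 0 < 2 * N := by omega
        exact Nat.mul_pos this (Nat.one_le_pow _ _ (by omega))
      rw [avg, tsum_fintype]
      have hsum : (∑ w : Sp, ((cyclen (φ w.1)) : ℝ)) =
          ((∑ w : Sp, cyclen (φ w.1) : ℕ) : ℝ) := by push_cast; rfl
      rw [hsum]
      have hden : (0:ℝ) < (n : ℝ) * ((D : ℕ) : ℝ) := by
        have : (0:ℝ) < (n:ℝ) := by exact_mod_cast hn
        have h2 : (0:ℝ) < ((D : ℕ) : ℝ) := by exact_mod_cast hDpos
        positivity
      rw [div_le_div_iff₀ hden (by exact_mod_cast h0N)]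
      have key5R : (N:ℝ) * ((∑ w : Sp, cyclen (φ w.1) : ℕ) : ℝ) ≤
          ((N:ℝ) + m) * ((n:ℝ) * (D:ℝ)) := by
        have := key5
        push_cast
        exact_mod_cast key5
      nlinarith [key5R]
  exact Filter.limsup_le_of_le
    (Filter.isCoboundedUnder_le_of_le Filter.atTop havg_nonneg)
    (Filter.Eventually.of_forall hbound)
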